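/- Assume the unit-root assumption, the complementation assumption, and that N_{−2} ≠ 0 and N_{−m} = 0 for every m ≥ 3 (pole of order exactly 2 at z = 1). Then: (a) N_{−2}(I − A₁) = (I − A₁)N_{−2} = 0 and A₁N_{−2} = N_{−2}A₁ = N_{−2}; (b) N_{−2}x = 0 for every x ∈ ran T + ker T; (c) N_{−2}(T^g x) = x for every x ∈ K; (d) ran N_{−2} = K; (e) N_{−1} = N_{−2} + P, where P := N_{−1}A₁. -/

import Mathlib

/-- Laurent coefficients at `z = 1` of the inverse pencil `(I - z A₁)⁻¹`:
`N j = -(1/(2πi)) ∮_{|z-1|=r} (I - z A₁)⁻¹ (z-1)^{-j-1} dz`. -/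
noncomputable def laurentN {B : Type*} [NormedAddCommGroup B] [NormedSpace ℂ B]
    (A₁ : B →L[ℂ] B) (r : ℝ) (j : ℤ) : B →L[ℂ] B :=
  (-(2 * (Real.pi : ℂ) * Complex.I)⁻¹) •
    circleIntegral (fun z => (z - 1) ^ (-j - 1) • Ring.inverse (1 - z • A₁)) 1 r

open Complex Metric

section aux
variable {E F : Type*} [NormedAddCommGroup E] [NormedSpace ℂ E]
  [NormedAddCommGroup F] [NormedSpace ℂ F]

lemma clm_circleIntegral_comm [CompleteSpace E] [CompleteSpace F]
    (L : E →L[ℂ] F) {f : ℂ → E} {c : ℂ} {R : ℝ} (hf : CircleIntegrable f c R) :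
    L (∮ z in C(c, R), f z) = ∮ z in C(c, R), L (f z) := by
  have h := L.intervalIntegral_comp_comm hf.out
  rw [circleIntegral, circleIntegral, ← h]
  congr 1
  ext θ
  rw [L.map_smul]

lemma circleIntegral_add {f g : ℂ → E} {c : ℂ} {R : ℝ} (hf : CircleIntegrable f c R)
    (hg : CircleIntegrable g c R) :
    (∮ z in C(c, R), (f z + g z)) = (∮ z in C(c, R), f z) + ∮ z in C(c, R), g z := by
  simp only [circleIntegral, smul_add]
  exact intervalIntegral.integral_add hf.out hg.out

lemma circleIntegral_zpow_smul [CompleteSpace E] (c : ℂ) {R : ℝ} (hR : 0 < R) (n : ℤ) (v : E) :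
    (∮ z in C(c, R), (z - c) ^ n • v)
      = if n = -1 then (2 * Real.pi * Complex.I) • v else 0 := by
  rw [circleIntegral.integral_smul_const]
  split_ifs with h
  · subst h
    simp only [zpow_neg_one]
    rw [circleIntegral.integral_sub_center_inv c hR.ne']
  · rw [circleIntegral.integral_sub_zpow_of_ne h, zero_smul]

lemma sphere_sub_ne {r : ℝ} (hr : 0 < r) {z : ℂ} (hz : z ∈ sphere (1:ℂ) r) : z - 1 ≠ 0 := by
  intro h
  rw [mem_sphere_iff_norm, h] at hz
  simp at hz
  exact hr.ne hz

lemma circleIntegrable_zpow_smul {R : ℝ} (hR : 0 < R) (n : ℤ) (v : E) :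
    CircleIntegrable (fun z => (z - 1) ^ n • v) 1 R := by
  refine ContinuousOn.circleIntegrable hR.le ?_
  exact ((continuousOn_id.sub continuousOn_const).zpow₀ n
    (fun z hz => Or.inl (sphere_sub_ne hR hz))).smul continuousOn_const

end aux

section main
variable {B : Type*} [NormedAddCommGroup B] [NormedSpace ℂ B] [CompleteSpace B]
  (A₁ : B →L[ℂ] B) {r : ℝ}

lemma aux_contF (hu : ∀ z ∈ sphere (1:ℂ) r, IsUnit (1 - z • A₁)) :
    ContinuousOn (fun z : ℂ => Ring.inverse (1 - z • A₁)) (sphere (1:ℂ) r) := by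
  intro z hz
  have hc : Continuous fun z : ℂ => 1 - z • A₁ :=
    continuous_const.sub (continuous_id.smul continuous_const)
  have h1 : ContinuousAt Ring.inverse ((fun z : ℂ => 1 - z • A₁) z) := by
    have h2 := NormedRing.inverse_continuousAt (hu z hz).unit
    simpa [IsUnit.unit_spec] using h2
  refine ContinuousAt.continuousWithinAt ?_
  show ContinuousAt (Ring.inverse ∘ fun z : ℂ => 1 - z • A₁) z
  exact h1.comp (x := z) hc.continuousAt

lemma aux_CI' (hr : 0 < r) (hu : ∀ z ∈ sphere (1:ℂ) r, IsUnit (1 - z • A₁)) (n : ℤ) :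
    CircleIntegrable (fun z => (z - 1) ^ n • Ring.inverse (1 - z • A₁)) 1 r := by
  refine ContinuousOn.circleIntegrable hr.le ?_
  exact ((continuousOn_id.sub continuousOn_const).zpow₀ n
    (fun z hz => Or.inl (sphere_sub_ne hr hz))).smul (aux_contF A₁ hu)

lemma aux_CIl (hr : 0 < r) (hu : ∀ z ∈ sphere (1:ℂ) r, IsUnit (1 - z • A₁)) (n : ℤ)
    (X : B →L[ℂ] B) :
    CircleIntegrable (fun z => X * ((z - 1) ^ n • Ring.inverse (1 - z • A₁))) 1 r := by
  refine ContinuousOn.circleIntegrable hr.le ?_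
  exact continuousOn_const.mul (((continuousOn_id.sub continuousOn_const).zpow₀ n
    (fun z hz => Or.inl (sphere_sub_ne hr hz))).smul (aux_contF A₁ hu))

lemma aux_CIr (hr : 0 < r) (hu : ∀ z ∈ sphere (1:ℂ) r, IsUnit (1 - z • A₁)) (n : ℤ)
    (X : B →L[ℂ] B) :
    CircleIntegrable (fun z => ((z - 1) ^ n • Ring.inverse (1 - z • A₁)) * X) 1 r := by
  refine ContinuousOn.circleIntegrable hr.le ?_
  exact (((continuousOn_id.sub continuousOn_const).zpow₀ n
    (fun z hz => Or.inl (sphere_sub_ne hr hz))).smul (aux_contF A₁ hu)).mul continuousOn_const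

lemma aux_mul_integral (X : B →L[ℂ] B) {f : ℂ → (B →L[ℂ] B)} {c : ℂ} {R : ℝ}
    (hf : CircleIntegrable f c R) :
    X * (∮ z in C(c, R), f z) = ∮ z in C(c, R), X * f z :=
  clm_circleIntegral_comm (ContinuousLinearMap.mul ℂ (B →L[ℂ] B) X) hf

lemma aux_integral_mul (X : B →L[ℂ] B) {f : ℂ → (B →L[ℂ] B)} {c : ℂ} {R : ℝ}
    (hf : CircleIntegrable f c R) :
    (∮ z in C(c, R), f z) * X = ∮ z in C(c, R), f z * X :=
  clm_circleIntegral_comm ((ContinuousLinearMap.mul ℂ (B →L[ℂ] B)).flip X) hf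

lemma aux_integral_apply (x : B) {f : ℂ → (B →L[ℂ] B)} {c : ℂ} {R : ℝ}
    (hf : CircleIntegrable f c R) :
    (∮ z in C(c, R), f z) x = ∮ z in C(c, R), f z x :=
  clm_circleIntegral_comm (ContinuousLinearMap.apply ℂ B x) hf

lemma aux_left (hr : 0 < r) (hu : ∀ z ∈ sphere (1:ℂ) r, IsUnit (1 - z • A₁))
    (j : ℤ) (hj : j ≠ 0) :
    (1 - A₁) * laurentN A₁ r j = A₁ * laurentN A₁ r (j - 1) := by
  have hj' : (-j - 1 : ℤ) ≠ -1 := by omega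
  have e : (-(j - 1) - 1 : ℤ) = -j := by ring
  simp only [laurentN, e]
  rw [mul_smul_comm, mul_smul_comm,
    aux_mul_integral (1 - A₁) (aux_CI' A₁ hr hu _), aux_mul_integral A₁ (aux_CI' A₁ hr hu _)]
  congr 1
  rw [← sub_eq_zero, ← circleIntegral.integral_sub (aux_CIl A₁ hr hu (-j - 1) (1 - A₁))
    (aux_CIl A₁ hr hu (-j) A₁)]
  have hpt : Set.EqOn
      (fun z : ℂ => (1 - A₁) * ((z - 1) ^ (-j - 1 : ℤ) • Ring.inverse (1 - z • A₁)) -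
        A₁ * ((z - 1) ^ (-j : ℤ) • Ring.inverse (1 - z • A₁)))
      (fun z : ℂ => (z - 1) ^ (-j - 1 : ℤ) • (1 : B →L[ℂ] B)) (sphere 1 r) := by
    intro z hz
    have hne := sphere_sub_ne hr hz
    have hzp : (z - 1) ^ (-j : ℤ) = (z - 1) ^ (-j - 1 : ℤ) * (z - 1) := by
      rw [← zpow_add_one₀ hne]; congr 1; ring
    simp only
    rw [mul_smul_comm, mul_smul_comm, hzp, mul_smul, ← smul_sub]
    congr 1
    rw [← smul_mul_assoc, ← sub_mul,
      show (1 : B →L[ℂ] B) - A₁ - (z - 1) • A₁ = 1 - z • A₁ by module]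
    exact Ring.mul_inverse_cancel _ (hu z hz)
  rw [circleIntegral.integral_congr hr.le hpt,
    circleIntegral_zpow_smul 1 hr (-j - 1) (1 : B →L[ℂ] B), if_neg hj']

lemma aux_right (hr : 0 < r) (hu : ∀ z ∈ sphere (1:ℂ) r, IsUnit (1 - z • A₁))
    (j : ℤ) (hj : j ≠ 0) :
    laurentN A₁ r j * (1 - A₁) = laurentN A₁ r (j - 1) * A₁ := by
  have hj' : (-j - 1 : ℤ) ≠ -1 := by omega
  have e : (-(j - 1) - 1 : ℤ) = -j := by ring
  simp only [laurentN, e]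
  rw [smul_mul_assoc, smul_mul_assoc,
    aux_integral_mul (1 - A₁) (aux_CI' A₁ hr hu _), aux_integral_mul A₁ (aux_CI' A₁ hr hu _)]
  congr 1
  rw [← sub_eq_zero, ← circleIntegral.integral_sub (aux_CIr A₁ hr hu (-j - 1) (1 - A₁))
    (aux_CIr A₁ hr hu (-j) A₁)]
  have hpt : Set.EqOn
      (fun z : ℂ => ((z - 1) ^ (-j - 1 : ℤ) • Ring.inverse (1 - z • A₁)) * (1 - A₁) -
        ((z - 1) ^ (-j : ℤ) • Ring.inverse (1 - z • A₁)) * A₁)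
      (fun z : ℂ => (z - 1) ^ (-j - 1 : ℤ) • (1 : B →L[ℂ] B)) (sphere 1 r) := by
    intro z hz
    have hne := sphere_sub_ne hr hz
    have hzp : (z - 1) ^ (-j : ℤ) = (z - 1) ^ (-j - 1 : ℤ) * (z - 1) := by
      rw [← zpow_add_one₀ hne]; congr 1; ring
    simp only
    rw [smul_mul_assoc, smul_mul_assoc, hzp, mul_smul, ← smul_sub]
    congr 1
    rw [← mul_smul_comm, ← mul_sub,
      show (1 : B →L[ℂ] B) - A₁ - (z - 1) • A₁ = 1 - z • A₁ by module]
    exact Ring.inverse_mul_cancel _ (hu z hz)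
  rw [circleIntegral.integral_congr hr.le hpt,
    circleIntegral_zpow_smul 1 hr (-j - 1) (1 : B →L[ℂ] B), if_neg hj']

end main

section main2
variable {B : Type*} [NormedAddCommGroup B] [NormedSpace ℂ B] [CompleteSpace B]
  (A₁ : B →L[ℂ] B) {r : ℝ}

lemma aux_inv_apply (hu : ∀ z ∈ sphere (1:ℂ) r, IsUnit (1 - z • A₁)) {z : ℂ}
    (hz : z ∈ sphere (1:ℂ) r) (v : B) :
    Ring.inverse (1 - z • A₁) ((1 - z • A₁) v) = v := by
  have h := Ring.inverse_mul_cancel _ (hu z hz)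
  have h2 := congrArg (fun X : B →L[ℂ] B => X v) h
  simpa using h2

lemma aux_fix (hr : 0 < r) (hu : ∀ z ∈ sphere (1:ℂ) r, IsUnit (1 - z • A₁))
    (w : B) (hw : A₁ w = w) {z : ℂ} (hz : z ∈ sphere (1:ℂ) r) :
    Ring.inverse (1 - z • A₁) w = (-(z - 1)⁻¹) • w := by
  have hne := sphere_sub_ne hr hz
  have key : (1 - z • A₁) ((-(z - 1)⁻¹) • w) = w := by
    rw [map_smul]
    have h1 : (1 - z • A₁) w = (1 - z) • w := by
      simp [ContinuousLinearMap.sub_apply, ContinuousLinearMap.smul_apply, hw, sub_smul]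
    rw [h1, smul_smul]
    have h2 : (-(z - 1)⁻¹) * (1 - z) = 1 := by field_simp; ring
    rw [h2, one_smul]
  conv_lhs => rw [← key]
  exact aux_inv_apply A₁ hu hz _

lemma aux_eval2 (hr : 0 < r) (hu : ∀ z ∈ sphere (1:ℂ) r, IsUnit (1 - z • A₁)) (v : B) :
    laurentN A₁ r (-2) v = (-(2 * (Real.pi : ℂ) * Complex.I)⁻¹) •
      ∮ z in C((1:ℂ), r), (z - 1) ^ (1:ℤ) • Ring.inverse (1 - z • A₁) v := by
  simp only [laurentN, show (-(-2:ℤ) - 1) = (1:ℤ) by norm_num]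
  rw [ContinuousLinearMap.smul_apply, aux_integral_apply v (aux_CI' A₁ hr hu 1)]
  simp only [ContinuousLinearMap.smul_apply]

lemma aux_ker (hr : 0 < r) (hu : ∀ z ∈ sphere (1:ℂ) r, IsUnit (1 - z • A₁))
    (w : B) (hw : A₁ w = w) : laurentN A₁ r (-2) w = 0 := by
  rw [aux_eval2 A₁ hr hu w]
  have hpt : Set.EqOn (fun z : ℂ => (z - 1) ^ (1:ℤ) • Ring.inverse (1 - z • A₁) w)
      (fun z : ℂ => (-1 : ℂ) • ((z - 1) ^ (0:ℤ) • w)) (sphere 1 r) := by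
    intro z hz
    have hne := sphere_sub_ne hr hz
    simp only
    rw [aux_fix A₁ hr hu w hw hz, zpow_one, zpow_zero, one_smul, smul_smul]
    congr 1
    field_simp
  rw [circleIntegral.integral_congr hr.le hpt, circleIntegral.integral_smul,
    circleIntegral_zpow_smul 1 hr 0 w, if_neg (by norm_num), smul_zero, smul_zero]

lemma aux_K (hr : 0 < r) (hu : ∀ z ∈ sphere (1:ℂ) r, IsUnit (1 - z • A₁))
    (x u : B) (hx : A₁ x = x) (hau : A₁ u = u - x) :
    laurentN A₁ r (-2) u = x := by
  have h2πI : (2 * (Real.pi : ℂ) * Complex.I) ≠ 0 := by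
    simp [Real.pi_ne_zero, Complex.I_ne_zero]
  rw [aux_eval2 A₁ hr hu u]
  have hpt : Set.EqOn (fun z : ℂ => (z - 1) ^ (1:ℤ) • Ring.inverse (1 - z • A₁) u)
      (fun z : ℂ => (-1 : ℂ) • ((z - 1) ^ (-1:ℤ) • x +
        ((z - 1) ^ (0:ℤ) • x + (z - 1) ^ (0:ℤ) • u))) (sphere 1 r) := by
    intro z hz
    have hne := sphere_sub_ne hr hz
    have h1z : (1 : ℂ) - z ≠ 0 := fun h => hne (by rw [← neg_sub 1 z, h, neg_zero])
    have h1 : (1 - z • A₁) u = (1 - z) • u + z • x := by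
      simp only [ContinuousLinearMap.sub_apply, ContinuousLinearMap.one_apply,
        ContinuousLinearMap.smul_apply, hau]
      module
    have h2 : (1 - z) • (Ring.inverse (1 - z • A₁) u)
        + z • (Ring.inverse (1 - z • A₁) x) = u := by
      rw [← map_smul, ← map_smul, ← map_add, ← h1, aux_inv_apply A₁ hu hz]
    have h4 : (1 - z) • Ring.inverse (1 - z • A₁) u = u - z • Ring.inverse (1 - z • A₁) x :=
      eq_sub_of_add_eq h2
    have h3 : Ring.inverse (1 - z • A₁) u
        = (1 - z)⁻¹ • (u - z • Ring.inverse (1 - z • A₁) x) := by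
      rw [← h4, inv_smul_smul₀ h1z]
    simp only
    rw [h3, aux_fix A₁ hr hu x hx hz]
    match_scalars
    · field_simp
      ring
    · field_simp
      ring
  rw [circleIntegral.integral_congr hr.le hpt, circleIntegral.integral_smul,
    circleIntegral_add (f := fun z : ℂ => (z - 1) ^ (-1:ℤ) • x)
      (g := fun z : ℂ => (z - 1) ^ (0:ℤ) • x + (z - 1) ^ (0:ℤ) • u)
      (circleIntegrable_zpow_smul hr (-1) x)
      (by exact (circleIntegrable_zpow_smul hr 0 x).add (circleIntegrable_zpow_smul hr 0 u)),
    circleIntegral_add (circleIntegrable_zpow_smul hr 0 x) (circleIntegrable_zpow_smul hr 0 u),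
    circleIntegral_zpow_smul 1 hr (-1) x, circleIntegral_zpow_smul 1 hr 0 x,
    circleIntegral_zpow_smul 1 hr 0 u, if_pos rfl, if_neg (by norm_num), if_neg (by norm_num)]
  rw [add_zero, add_zero, smul_smul, smul_smul]
  rw [show (-(2 * (Real.pi : ℂ) * Complex.I)⁻¹) * (-1) * (2 * Real.pi * Complex.I) = 1 by
    field_simp, one_smul]

end main2

/-- with `T := I - A₁` and `K := ran T ∩ ker T`, under the unit-root
assumption, the complementation assumption and a pole of order exactly 2 at `z = 1`:
(a) `N_{-2} T = T N_{-2} = 0` and `A₁ N_{-2} = N_{-2} A₁ = N_{-2}`;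
(b) `N_{-2} x = 0` for every `x ∈ ran T + ker T`;
(c) `N_{-2} (Tg x) = x` for every `x ∈ K`;
(d) `ran N_{-2} = K`;
(e) `N_{-1} = N_{-2} + P` where `P := N_{-1} A₁`. -/
theorem statement15
    {B : Type*} [NormedAddCommGroup B] [NormedSpace ℂ B] [CompleteSpace B]
    (A₁ : B →L[ℂ] B) (η : ℝ) (hη : 0 < η)
    (hinv : ∀ z : ℂ, ‖z‖ < 1 + η → z ≠ 1 → IsUnit (1 - z • A₁))
    (hnot : ¬ IsUnit (1 - A₁))
    (r : ℝ) (hr0 : 0 < r) (hrη : r < η)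
    (T : B →L[ℂ] B) (hT : T = 1 - A₁)
    (hranclosed : IsClosed ((LinearMap.range (T : B →ₗ[ℂ] B) : Submodule ℂ B) : Set B))
    (Pran Pker : B →L[ℂ] B)
    (hPran_idem : Pran * Pran = Pran)
    (hPran_range : LinearMap.range (Pran : B →ₗ[ℂ] B) = LinearMap.range (T : B →ₗ[ℂ] B))
    (hPker_idem : Pker * Pker = Pker)
    (hPker_range : LinearMap.range (Pker : B →ₗ[ℂ] B) = LinearMap.ker (T : B →ₗ[ℂ] B))
    (Tg : B →L[ℂ] B)
    (hTg1 : T * Tg = Pran) (hTg2 : Tg * T = 1 - Pker)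
    (hTg3 : Tg = (1 - Pker) * Tg * Pran)
    (hN2 : laurentN A₁ r (-2) ≠ 0)
    (hNm : ∀ m : ℤ, 3 ≤ m → laurentN A₁ r (-m) = 0) :
    (laurentN A₁ r (-2) * (1 - A₁) = 0 ∧ (1 - A₁) * laurentN A₁ r (-2) = 0 ∧
      A₁ * laurentN A₁ r (-2) = laurentN A₁ r (-2) ∧
      laurentN A₁ r (-2) * A₁ = laurentN A₁ r (-2)) ∧
    (∀ x ∈ (LinearMap.range (T : B →ₗ[ℂ] B) ⊔ LinearMap.ker (T : B →ₗ[ℂ] B) : Submodule ℂ B),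
      laurentN A₁ r (-2) x = 0) ∧
    (∀ x ∈ (LinearMap.range (T : B →ₗ[ℂ] B) ⊓ LinearMap.ker (T : B →ₗ[ℂ] B) : Submodule ℂ B),
      laurentN A₁ r (-2) (Tg x) = x) ∧
    (LinearMap.range (laurentN A₁ r (-2) : B →ₗ[ℂ] B) = LinearMap.range (T : B →ₗ[ℂ] B) ⊓ LinearMap.ker (T : B →ₗ[ℂ] B)) ∧
    (laurentN A₁ r (-1) = laurentN A₁ r (-2) + laurentN A₁ r (-1) * A₁) := by
  have hsp : ∀ z ∈ sphere (1:ℂ) r, IsUnit (1 - z • A₁) := by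
    intro z hz
    rw [mem_sphere_iff_norm] at hz
    have hz1 : z ≠ 1 := by
      intro h
      rw [h] at hz
      simp at hz
      exact hr0.ne hz
    refine hinv z ?_ hz1
    calc ‖z‖ = ‖z - 1 + 1‖ := by ring_nf
      _ ≤ ‖z - 1‖ + ‖(1:ℂ)‖ := norm_add_le _ _
      _ = r + 1 := by rw [norm_one, hz]
      _ < 1 + η := by linarith
  have hN3 : laurentN A₁ r (-3) = 0 := hNm 3 le_rfl
  have hL2 := aux_left A₁ hr0 hsp (-2) (by norm_num)
  have hR2 := aux_right A₁ hr0 hsp (-2) (by norm_num)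
  have hL1 := aux_left A₁ hr0 hsp (-1) (by norm_num)
  have hR1 := aux_right A₁ hr0 hsp (-1) (by norm_num)
  norm_num at hL2 hR2 hL1 hR1
  rw [hN3, mul_zero] at hL2
  rw [hN3, zero_mul] at hR2
  have hTN2 : (1 - A₁) * laurentN A₁ r (-2) = 0 := hL2
  have hN2T : laurentN A₁ r (-2) * (1 - A₁) = 0 := hR2
  have hA : A₁ * laurentN A₁ r (-2) = laurentN A₁ r (-2) := by
    have h := hTN2
    rw [sub_mul, one_mul, sub_eq_zero] at h
    exact h.symm
  have hA' : laurentN A₁ r (-2) * A₁ = laurentN A₁ r (-2) := by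
    have h := hN2T
    rw [mul_sub, mul_one, sub_eq_zero] at h
    exact h.symm
  have hTN1 : (1 - A₁) * laurentN A₁ r (-1) = laurentN A₁ r (-2) := by rw [hL1, hA]
  have hN1T : laurentN A₁ r (-1) * (1 - A₁) = laurentN A₁ r (-2) := by rw [hR1, hA']
  have hker0 : ∀ w ∈ LinearMap.ker (T : B →ₗ[ℂ] B), A₁ w = w := by
    intro w hw
    have h : T w = 0 := LinearMap.mem_ker.mp hw
    rw [hT] at h
    simp only [ContinuousLinearMap.sub_apply, ContinuousLinearMap.one_apply] at h
    rw [← sub_eq_zero]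
    rw [← neg_sub w (A₁ w), h, neg_zero]
  have hc : ∀ x ∈ (LinearMap.range (T : B →ₗ[ℂ] B) ⊓ LinearMap.ker (T : B →ₗ[ℂ] B) : Submodule ℂ B),
      laurentN A₁ r (-2) (Tg x) = x := by
    intro x hx
    have hx1 : A₁ x = x := hker0 x hx.2
    have hxr : x ∈ LinearMap.range (Pran : B →ₗ[ℂ] B) := by rw [hPran_range]; exact hx.1
    obtain ⟨y, hy : Pran y = x⟩ := hxr
    have hPx : Pran x = x := by
      calc Pran x = Pran (Pran y) := by rw [hy]
        _ = (Pran * Pran) y := rfl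
        _ = Pran y := by rw [hPran_idem]
        _ = x := hy
    have hTu : T (Tg x) = x := by
      have h : (T * Tg) x = x := by rw [hTg1]; exact hPx
      simpa [ContinuousLinearMap.mul_apply] using h
    have hAu : A₁ (Tg x) = Tg x - x := by
      have h := hTu
      rw [hT] at h
      simp only [ContinuousLinearMap.sub_apply, ContinuousLinearMap.one_apply] at h
      have h2 : Tg x - (Tg x - A₁ (Tg x)) = A₁ (Tg x) := by abel
      rw [← h2, h]
    exact aux_K A₁ hr0 hsp x (Tg x) hx1 hAu
  refine ⟨⟨hN2T, hTN2, hA, hA'⟩, ?_, hc, ?_, ?_⟩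
  · intro x hx
    rcases Submodule.mem_sup.mp hx with ⟨y, hy, w, hw, rfl⟩
    obtain ⟨v, rfl⟩ := hy
    have h1 : laurentN A₁ r (-2) (T v) = 0 := by
      have h : (laurentN A₁ r (-2) * T) v = 0 := by
        rw [hT, hN2T]
        rfl
      simpa [ContinuousLinearMap.mul_apply] using h
    have h2 : laurentN A₁ r (-2) w = 0 := aux_ker A₁ hr0 hsp w (hker0 w hw)
    rw [map_add]
    simp only [ContinuousLinearMap.coe_coe] at h1 ⊢
    rw [h1, h2, add_zero]
  · refine le_antisymm ?_ ?_
    · rintro v ⟨y, rfl⟩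
      refine Submodule.mem_inf.mpr ⟨?_, ?_⟩
      · refine LinearMap.mem_range.mpr ⟨laurentN A₁ r (-1) y, ?_⟩
        have h : (T * laurentN A₁ r (-1)) y = laurentN A₁ r (-2) y := by rw [hT, hTN1]
        simpa [ContinuousLinearMap.mul_apply] using h
      · refine LinearMap.mem_ker.mpr ?_
        have h : (T * laurentN A₁ r (-2)) y = 0 := by
          rw [hT, hTN2]
          rfl
        simpa [ContinuousLinearMap.mul_apply] using h
    · intro v hv
      exact ⟨Tg v, hc v hv⟩
  · have h := hN1T
    rw [mul_sub, mul_one] at h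
    rw [← h]
    abel
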